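/- Let n ≥ 2, let H be an n×n real symmetric positive definite matrix, let Q_m be an n×n real matrix such that Q_m + Q_mᵀ is positive semidefinite, let B = diag(−1, 0, …, 0, 1), and set D_m = H⁻¹(Q_m + B/2). Let e₀ = (1,0,…,0)ᵀ ∈ ℝⁿ and let τ ≤ −1/2. If u : ℝ → ℝⁿ is differentiable and satisfies the semidiscretization u'(t) = −D_m u(t) + τ H⁻¹ e₀ (u(t))₁ for all t (homogeneous boundary data g ≡ 0), then the discrete energy t ↦ u(t)ᵀ H u(t) is nonincreasing: its derivative is ≤ 0 for all t. -/

import Mathlib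

open Matrix

lemma hasDerivAt_energy {n : ℕ} (H : Matrix (Fin n) (Fin n) ℝ)
    (u : ℝ → Fin n → ℝ) (u' : Fin n → ℝ) (t : ℝ)
    (hu : HasDerivAt u u' t) :
    HasDerivAt (fun s => u s ⬝ᵥ (H *ᵥ u s))
      (u' ⬝ᵥ (H *ᵥ u t) + u t ⬝ᵥ (H *ᵥ u')) t := by
  have hcomp : ∀ i, HasDerivAt (fun s => u s i) (u' i) t :=
    hasDerivAt_pi.1 hu
  have key : HasDerivAt (fun s => ∑ i, ∑ j, u s i * (H i j * u s j))
      (∑ i, ∑ j, (u' i * (H i j * u t j) + u t i * (H i j * u' j))) t := by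
    apply HasDerivAt.fun_sum
    intro i _
    apply HasDerivAt.fun_sum
    intro j _
    have := (hcomp i).fun_mul (((hcomp j)).const_mul (H i j))
    simpa using this
  have e1 : (fun s => ∑ i, ∑ j, u s i * (H i j * u s j)) =
      (fun s => u s ⬝ᵥ (H *ᵥ u s)) := by
    funext s
    simp [dotProduct, mulVec, Finset.mul_sum]
  have e2 : (∑ i, ∑ j, (u' i * (H i j * u t j) + u t i * (H i j * u' j))) =
      u' ⬝ᵥ (H *ᵥ u t) + u t ⬝ᵥ (H *ᵥ u') := by
    simp [dotProduct, mulVec, Finset.mul_sum, Finset.sum_add_distrib]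
  rw [← e1, ← e2]
  exact key

/-- Energy stability of the upwind SBP-SAT semidiscretization of the advection
equation with homogeneous boundary data: the discrete energy `uᵀHu` is
nonincreasing (its derivative is `≤ 0`) whenever `τ ≤ -1/2`. -/
theorem stmt_0 (n : ℕ) (hn : 2 ≤ n)
    (H Qm : Matrix (Fin n) (Fin n) ℝ)
    (hH : H.PosDef) (hQ : (Qm + Qmᵀ).PosSemidef)
    (B : Matrix (Fin n) (Fin n) ℝ)
    (hB : B = Matrix.diagonal (fun i =>
      if i.val = 0 then (-1 : ℝ) else if i.val = n - 1 then 1 else 0))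
    (Dm : Matrix (Fin n) (Fin n) ℝ)
    (hDm : Dm = H⁻¹ * (Qm + (1/2 : ℝ) • B))
    (e₀ : Fin n → ℝ) (he₀ : e₀ = fun i => if i.val = 0 then 1 else 0)
    (τ : ℝ) (hτ : τ ≤ -1/2)
    (u : ℝ → Fin n → ℝ)
    (hu : ∀ t : ℝ, HasDerivAt u
      (-(Dm *ᵥ u t) + (τ * u t ⟨0, by omega⟩) • (H⁻¹ *ᵥ e₀)) t) :
    (∀ t : ℝ, deriv (fun s => u s ⬝ᵥ (H *ᵥ u s)) t ≤ 0) ∧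
      Antitone (fun t => u t ⬝ᵥ (H *ᵥ u t)) := by
  have i0 : Fin n := ⟨0, by omega⟩
  have hdet : IsUnit H.det := isUnit_iff_ne_zero.2 (ne_of_gt hH.det_pos)
  have hHH : H * H⁻¹ = 1 := Matrix.mul_nonsing_inv H hdet
  have hsymm : Hᵀ = H := by
    have := hH.1
    simpa [Matrix.IsHermitian, Matrix.conjTranspose_eq_transpose_of_trivial] using this
  -- symmetric bilinear form identity
  have hflip : ∀ v w : Fin n → ℝ, v ⬝ᵥ (H *ᵥ w) = w ⬝ᵥ (H *ᵥ v) := by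
    intro v w
    rw [Matrix.dotProduct_mulVec, ← Matrix.mulVec_transpose, hsymm,
      dotProduct_comm]
  have hflipQ : ∀ v : Fin n → ℝ, v ⬝ᵥ (Qmᵀ *ᵥ v) = v ⬝ᵥ (Qm *ᵥ v) := by
    intro v
    rw [Matrix.dotProduct_mulVec, ← Matrix.mulVec_transpose, Matrix.transpose_transpose,
      dotProduct_comm]
  have hderiv : ∀ t, deriv (fun s => u s ⬝ᵥ (H *ᵥ u s)) t ≤ 0 := by
    intro t
    set v := u t with hv
    set c : ℝ := τ * u t ⟨0, by omega⟩ with hc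
    set v' : Fin n → ℝ := -(Dm *ᵥ u t) + c • (H⁻¹ *ᵥ e₀) with hv'
    have hE := hasDerivAt_energy H u v' t (hu t)
    rw [hE.deriv]
    -- compute H *ᵥ v'
    have hHv' : H *ᵥ v' = -((Qm + (1/2 : ℝ) • B) *ᵥ v) + c • e₀ := by
      rw [hv', Matrix.mulVec_add, Matrix.mulVec_neg, Matrix.mulVec_smul, hDm,
        ← Matrix.mulVec_mulVec, ← hv, Matrix.mulVec_mulVec _ H H⁻¹,
        Matrix.mulVec_mulVec _ H H⁻¹, hHH, Matrix.one_mulVec, Matrix.one_mulVec]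
    have hval : v' ⬝ᵥ (H *ᵥ v) + v ⬝ᵥ (H *ᵥ v') = 2 * (v ⬝ᵥ (H *ᵥ v')) := by
      rw [hflip v' v]; ring
    rw [hval, hHv']
    -- expand
    have hexp : v ⬝ᵥ (-((Qm + (1/2 : ℝ) • B) *ᵥ v) + c • e₀) =
        -(v ⬝ᵥ (Qm *ᵥ v)) - (1/2 : ℝ) * (v ⬝ᵥ (B *ᵥ v)) + c * (v ⬝ᵥ e₀) := by
      rw [dotProduct_add, dotProduct_neg, Matrix.add_mulVec,
        Matrix.smul_mulVec, dotProduct_add, dotProduct_smul,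
        dotProduct_smul]
      simp only [smul_eq_mul]
      ring
    rw [hexp]
    -- quadratic form nonneg
    have hquad : 0 ≤ v ⬝ᵥ ((Qm + Qmᵀ) *ᵥ v) := by
      have := hQ.dotProduct_mulVec_nonneg v
      simpa using this
    have h2Q : v ⬝ᵥ ((Qm + Qmᵀ) *ᵥ v) = 2 * (v ⬝ᵥ (Qm *ᵥ v)) := by
      rw [Matrix.add_mulVec, dotProduct_add, hflipQ]; ring
    -- dot with e₀
    have he : v ⬝ᵥ e₀ = v ⟨0, by omega⟩ := by
      rw [he₀]
      simp [dotProduct]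
      rw [Finset.sum_eq_single (⟨0, by omega⟩ : Fin n)]
      · simp
      · intro b _ hb
        have : ¬ (b.val = 0) := fun h => hb (Fin.ext h)
        simp [this]
      · simp
    -- B quadratic form
    have hBval : v ⬝ᵥ (B *ᵥ v) = -(v ⟨0, by omega⟩)^2 + (v ⟨n-1, by omega⟩)^2 := by
      rw [hB]
      have : ∀ i : Fin n, v i * ((Matrix.diagonal (fun i : Fin n =>
          if i.val = 0 then (-1 : ℝ) else if i.val = n - 1 then 1 else 0) *ᵥ v) i) =
          (if i = ⟨0, by omega⟩ then -(v ⟨0, by omega⟩)^2 else 0) +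
          (if i = ⟨n-1, by omega⟩ then (v ⟨n-1, by omega⟩)^2 else 0) := by
        intro i
        rw [Matrix.mulVec_diagonal]
        rcases eq_or_ne i ⟨0, by omega⟩ with h0 | h0
        · have : (i : Fin n).val = 0 := by rw [h0]
          have hne : i ≠ ⟨n-1, by omega⟩ := by
            rw [h0]; intro h
            have := congrArg Fin.val h
            simp at this; omega
          have h01 : ¬ ((0 : ℕ) = n - 1) := by omega
          simp [h0, this, hne, h01]
          ring
        · have h0' : ¬ (i.val = 0) := fun h => h0 (Fin.ext h)
          rcases eq_or_ne i ⟨n-1, by omega⟩ with h1 | h1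
          · have : i.val = n - 1 := by rw [h1]
            have h10 : ¬ (n - 1 = 0) := by omega
            simp [h1, h0', this, h10]
            ring
          · have h1' : ¬ (i.val = n - 1) := fun h => h1 (Fin.ext h)
            simp [h0, h1, h0', h1']
      unfold dotProduct
      rw [Finset.sum_congr rfl (fun i _ => this i), Finset.sum_add_distrib]
      simp
    rw [hBval, he]
    have hc' : c = τ * v ⟨0, by omega⟩ := rfl
    rw [hc']
    nlinarith [hquad, h2Q, sq_nonneg (v ⟨0, by omega⟩), sq_nonneg (v ⟨n-1, by omega⟩),
      mul_nonneg (by linarith : (0:ℝ) ≤ -1/2 - τ) (sq_nonneg (v ⟨0, by omega⟩))]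
  refine ⟨hderiv, ?_⟩
  apply antitone_of_deriv_nonpos
  · intro t
    exact (hasDerivAt_energy H u _ t (hu t)).differentiableAt
  · exact hderiv
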